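/- For every positive integer n, the sum ∑_{k∈ℤ} (-1)^⌈k/2⌉ · p(n - k(3k+1)/2) is even, where p(x) = 0 for negative x. -/

import Mathlib

/-- The unrestricted partition function. -/
noncomputable def partitionCount (n : ℕ) : ℕ := Nat.card (Nat.Partition n)
/-- Extension of a function `ℕ → ℕ` to `ℤ`, vanishing at negative arguments. -/
def intExt (f : ℕ → ℕ) (x : ℤ) : ℤ := if 0 ≤ x then f x.toNat else 0

open Multiset

open Multiset

/-- Pentagonal-type numbers as integers. -/
def gZ (k : ℤ) : ℤ := k * (3 * k + 1) / 2

lemma two_gZ (k : ℤ) : 2 * gZ k = k * (3 * k + 1) := by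
  have h : (2 : ℤ) ∣ k * (3 * k + 1) := by
    rcases Int.even_or_odd k with ⟨m, hm⟩ | ⟨m, hm⟩
    · exact ⟨m * (3 * k + 1), by rw [hm]; ring⟩
    · exact ⟨k * (3 * m + 2), by rw [hm]; ring⟩
  exact Int.mul_ediv_cancel' h

lemma gZ_sub_one (j : ℤ) : gZ (j - 1) = gZ j - (3 * j - 1) := by
  have h1 := two_gZ (j - 1); have h2 := two_gZ j; nlinarith [h1, h2]

lemma gZ_add_one (j : ℤ) : gZ (j + 1) = gZ j + (3 * j + 2) := by
  have h1 := two_gZ (j + 1); have h2 := two_gZ j; nlinarith [h1, h2]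

lemma abs_le_gZ (k : ℤ) : |k| ≤ gZ k := by
  have h := two_gZ k
  rcases abs_cases k with ⟨h1, h2⟩ | ⟨h1, h2⟩ <;> rw [h1]
  · have h3 : 0 ≤ k * (3 * k - 1) := by
      rcases eq_or_lt_of_le h2 with rfl | hpos
      · simp
      · exact mul_nonneg (by omega) (by omega)
    linarith [h, h3]
  · have h3 : 0 ≤ k * (k + 1) := by nlinarith [h2]
    linarith [h, h3]

lemma gZ_zero : gZ 0 = 0 := rfl

/-- sup of a nonempty multiset of naturals is a member. -/
lemma Multiset.sup_mem_of_ne_zero {s : Multiset ℕ} (h : s ≠ 0) : s.sup ∈ s := by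
  induction s using Multiset.induction_on with
  | empty => exact absurd rfl h
  | cons a t ih =>
    rw [sup_cons]
    rcases eq_or_ne t 0 with rfl | ht
    · simp
    · rcases le_total a t.sup with hle | hle
      · rw [sup_eq_right.2 hle]; exact mem_cons_of_mem (ih ht)
      · rw [sup_eq_left.2 hle]; exact mem_cons_self a t

lemma sum_map_pred (s : Multiset ℕ) (h : ∀ x ∈ s, 0 < x) :
    (s.map (· - 1)).sum + s.card = s.sum := by
  induction s using Multiset.induction_on with
  | empty => simp
  | cons a t ih =>
    have ha : 0 < a := h a (mem_cons_self a t)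
    have ht : ∀ x ∈ t, 0 < x := fun x hx => h x (mem_cons_of_mem hx)
    simp only [map_cons, sum_cons, card_cons]
    have := ih ht
    omega

lemma sum_filter_ne_zero (s : Multiset ℕ) : (s.filter (· ≠ 0)).sum = s.sum := by
  induction s using Multiset.induction_on with
  | empty => simp
  | cons a t ih =>
    rcases eq_or_ne a 0 with rfl | ha
    · rw [filter_cons_of_neg _ (by simp)]; simp [ih]
    · rw [filter_cons_of_pos _ (by simpa using ha)]; simp [ih]

/-- Case A condition for the Bressoud–Zeilberger involution. -/
def CA (j : ℤ) (s : Multiset ℕ) : Prop := (s.sup : ℤ) ≤ (s.card : ℤ) + 3 * j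

instance (j : ℤ) (s : Multiset ℕ) : Decidable (CA j s) := by unfold CA; infer_instance

/-- Case A part of the involution on partitions. -/
def partsA (j : ℤ) (s : Multiset ℕ) : Multiset ℕ :=
  (((s.card : ℤ) + 3 * j - 1).toNat ::ₘ s.map (· - 1)).filter (· ≠ 0)

/-- Case B part of the involution on partitions. -/
def partsB (j : ℤ) (s : Multiset ℕ) : Multiset ℕ :=
  if s = 0 then Multiset.replicate (-3 * j - 2).toNat 1
  else (s.erase s.sup).map (· + 1) +
    Multiset.replicate ((s.sup : ℤ) - (s.card : ℤ) - 3 * j - 1).toNat 1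

/-- The multiset part of the involution. -/
def phiParts (j : ℤ) (s : Multiset ℕ) : Multiset ℕ :=
  if CA j s then partsA j s else partsB j s

/-- The index part of the involution. -/
def phiIdx (j : ℤ) (s : Multiset ℕ) : ℤ := if CA j s then j - 1 else j + 1

lemma phiParts_pos (j : ℤ) (s : Multiset ℕ) (hs : ∀ x ∈ s, 0 < x) :
    ∀ x ∈ phiParts j s, 0 < x := by
  intro x hx
  unfold phiParts at hx
  split at hx
  · unfold partsA at hx
    rw [mem_filter] at hx
    omega
  · unfold partsB at hx
    split at hx
    · rw [eq_of_mem_replicate hx]; omega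
    · rw [mem_add] at hx
      rcases hx with hx | hx
      · rw [mem_map] at hx; omega
      · rw [eq_of_mem_replicate hx]; omega

lemma sum_partsA (j : ℤ) (s : Multiset ℕ) (hA : CA j s) (hs : ∀ x ∈ s, 0 < x)
    (hj : s = 0 → 1 ≤ j) :
    ((partsA j s).sum : ℤ) = (s.sum : ℤ) + 3 * j - 1 := by
  have ha : 0 ≤ (s.card : ℤ) + 3 * j - 1 := by
    rcases eq_or_ne s 0 with rfl | hne
    · have := hj rfl; simp; omega
    · have hL : 1 ≤ s.sup := hs _ (Multiset.sup_mem_of_ne_zero hne)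
      unfold CA at hA
      omega
  unfold partsA
  rw [sum_filter_ne_zero, sum_cons]
  have h2 := sum_map_pred s hs
  omega

lemma sum_partsB (j : ℤ) (s : Multiset ℕ) (hB : ¬ CA j s) (hs : ∀ x ∈ s, 0 < x) :
    ((partsB j s).sum : ℤ) = (s.sum : ℤ) - 3 * j - 2 := by
  unfold CA at hB
  unfold partsB
  split
  · next h =>
    subst h
    rw [Multiset.sum_replicate, smul_eq_mul, mul_one]
    have hb : (⊥ : ℕ) = 0 := rfl
    simp only [Multiset.sup_zero, Multiset.card_zero, hb, Nat.cast_zero] at hB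
    simp only [Multiset.sum_zero]
    omega
  · next hne =>
    have hLmem : s.sup ∈ s := Multiset.sup_mem_of_ne_zero hne
    have hce : s.sup ::ₘ s.erase s.sup = s := Multiset.cons_erase hLmem
    have hsum : s.sup + (s.erase s.sup).sum = s.sum := by
      conv_rhs => rw [← hce]
      rw [sum_cons]
    have hcard : (s.erase s.sup).card + 1 = s.card := by
      conv_rhs => rw [← hce]
      rw [card_cons]
    have hm : 0 ≤ (s.sup : ℤ) - (s.card : ℤ) - 3 * j - 1 := by omega
    rw [Multiset.sum_add, Multiset.sum_replicate, smul_eq_mul, mul_one]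
    have hmapsum : ((s.erase s.sup).map (· + 1)).sum = (s.erase s.sup).sum
        + (s.erase s.sup).card := by
      induction (s.erase s.sup) using Multiset.induction_on with
      | empty => simp
      | cons a t ih => simp only [map_cons, sum_cons, card_cons] at *; omega
    omega

lemma filter_map_pred (s : Multiset ℕ) (hs : ∀ x ∈ s, 0 < x) :
    (s.map (· - 1)).filter (· ≠ 0) = (s.filter (· ≠ 1)).map (· - 1) := by
  rw [Multiset.filter_map]
  congr 1
  apply Multiset.filter_congr
  intro x hx
  have := hs x hx
  simp only [Function.comp, ne_eq]
  omega

lemma card_filter_ne_one (s : Multiset ℕ) :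
    (s.filter (· ≠ 1)).card + s.count 1 = s.card := by
  have h := congrArg Multiset.card (Multiset.filter_add_not (· = 1) s)
  rw [Multiset.card_add, Multiset.filter_eq', Multiset.card_replicate] at h
  rw [show s.filter (fun a => ¬ a = 1) = s.filter (· ≠ 1) from
    Multiset.filter_congr (fun x _ => Iff.rfl)] at h
  omega

lemma recover_ones (s : Multiset ℕ) :
    s.filter (· ≠ 1) + Multiset.replicate (s.count 1) 1 = s := by
  have h := Multiset.filter_add_not (fun x => ¬ x = 1) s
  rw [show s.filter (fun a => ¬ ¬ a = 1) = s.filter (· = 1) from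
    Multiset.filter_congr (fun x _ => not_not), Multiset.filter_eq'] at h
  rw [show s.filter (fun a => ¬ a = 1) = s.filter (· ≠ 1) from
    Multiset.filter_congr (fun x _ => Iff.rfl)] at h
  exact h

lemma invAB (j : ℤ) (s : Multiset ℕ) (hA : CA j s) (hs : ∀ x ∈ s, 0 < x)
    (hj : s = 0 → 1 ≤ j) :
    ¬ CA (j - 1) (partsA j s) ∧ partsB (j - 1) (partsA j s) = s := by
  rcases eq_or_ne s 0 with rfl | hne
  · have hj1 := hj rfl
    have hpA : partsA j 0 = {(3 * j - 1).toNat} := by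
      unfold partsA
      simp only [Multiset.card_zero, Nat.cast_zero, Multiset.map_zero, zero_add]
      rw [Multiset.filter_cons_of_pos _ (by simp only [ne_eq]; omega)]
      simp
    rw [hpA]
    have hsup : ({(3 * j - 1).toNat} : Multiset ℕ).sup = (3 * j - 1).toNat := by
      simp [Multiset.sup_singleton]
    constructor
    · unfold CA
      rw [hsup]
      simp only [Multiset.card_singleton]
      omega
    · unfold partsB
      rw [if_neg (by simp)]
      rw [hsup]
      have : ((3 * j - 1).toNat ::ₘ 0).erase (3 * j - 1).toNat = 0 :=
        Multiset.erase_cons_head _ _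
      rw [show ({(3 * j - 1).toNat} : Multiset ℕ) = (3 * j - 1).toNat ::ₘ 0 from rfl, this]
      have hm : ((((3 * j - 1).toNat : ℕ) : ℤ) - ((((3 * j - 1).toNat ::ₘ 0 : Multiset ℕ).card : ℕ) : ℤ) - 3 * (j - 1) - 1).toNat = 0 := by
        simp only [Multiset.card_cons, Multiset.card_zero]
        omega
      rw [hm]
      simp
  · -- s nonempty
    have hLmem : s.sup ∈ s := Multiset.sup_mem_of_ne_zero hne
    have hL1 : 1 ≤ s.sup := hs _ hLmem
    have ht1 : 1 ≤ s.card := Multiset.card_pos.2 hne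
    unfold CA at hA
    rcases eq_or_lt_of_le (show (1 : ℤ) ≤ (s.card : ℤ) + 3 * j by omega) with heq1 | hgt1
    · -- a = 0 case : card + 3j = 1, all parts equal 1
      have hLle : s.sup ≤ 1 := by omega
      have hall : ∀ b ∈ s, b = 1 := fun b hb =>
        le_antisymm (le_trans (Multiset.le_sup hb) hLle) (hs b hb)
      have hsrep : s = Multiset.replicate s.card 1 :=
        (Multiset.eq_replicate_card).2 hall
      have hpA : partsA j s = 0 := by
        unfold partsA
        rw [Multiset.filter_cons_of_neg _ (by simp only [ne_eq]; omega)]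
        rw [Multiset.filter_eq_nil.2 ?_]
        intro a ha
        rw [Multiset.mem_map] at ha
        obtain ⟨x, hx, rfl⟩ := ha
        have := hall x hx
        simp only [ne_eq, not_not]
        omega
      rw [hpA]
      constructor
      · unfold CA
        simp only [Multiset.sup_zero, Multiset.card_zero, Nat.cast_zero, zero_add]
        have : ((⊥ : ℕ) : ℤ) = 0 := rfl
        rw [this]
        omega
      · unfold partsB
        rw [if_pos rfl]
        have : (-3 * (j - 1) - 2).toNat = s.card := by omega
        rw [this, ← hsrep]
    · -- main case : a ≥ 1
      set aZ : ℤ := (s.card : ℤ) + 3 * j - 1 with haZ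
      have haZ1 : 1 ≤ aZ := by omega
      set a : ℕ := aZ.toNat with hadef
      have hacast : (a : ℤ) = aZ := Int.toNat_of_nonneg (by omega)
      have ha1 : 1 ≤ a := by omega
      set dec : Multiset ℕ := (s.map (· - 1)).filter (· ≠ 0) with hdec
      have hpA : partsA j s = a ::ₘ dec := by
        unfold partsA
        rw [Multiset.filter_cons_of_pos _ (by simp only [ne_eq]; omega)]
      have hdec2 : dec = (s.filter (· ≠ 1)).map (· - 1) := filter_map_pred s hs
      have hsupdec : dec.sup ≤ a := by
        apply Multiset.sup_le.2
        intro b hb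
        rw [hdec2, Multiset.mem_map] at hb
        obtain ⟨x, hx, rfl⟩ := hb
        have hxs : x ∈ s := Multiset.mem_of_mem_filter hx
        have hxL : x ≤ s.sup := Multiset.le_sup hxs
        omega
      have hsupA : (a ::ₘ dec).sup = a := by
        rw [Multiset.sup_cons, sup_eq_left.2 hsupdec]
      have hcdec : dec.card + s.count 1 = s.card := by
        rw [hdec2, Multiset.card_map]
        exact card_filter_ne_one s
      have hcount : s.count 1 ≤ s.card := Multiset.count_le_card 1 s
      rw [hpA]
      constructor
      · unfold CA
        rw [hsupA, Multiset.card_cons]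
        omega
      · unfold partsB
        rw [if_neg (Multiset.cons_ne_zero)]
        rw [hsupA, Multiset.erase_cons_head]
        have hmap : dec.map (· + 1) = s.filter (· ≠ 1) := by
          rw [hdec2, Multiset.map_map]
          have : ∀ x ∈ s.filter (· ≠ 1), ((· + 1) ∘ (· - 1)) x = id x := by
            intro x hx
            have := hs x (Multiset.mem_of_mem_filter hx)
            simp only [Function.comp, id]
            omega
          rw [Multiset.map_congr rfl this, Multiset.map_id]
        have hmval : ((a : ℤ) - ((a ::ₘ dec).card : ℤ) - 3 * (j - 1) - 1).toNat = s.count 1 := by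
          rw [Multiset.card_cons]
          push_cast
          omega
        rw [hmval, hmap]
        exact recover_ones s

lemma invBA (j : ℤ) (s : Multiset ℕ) (hB : ¬ CA j s) (hs : ∀ x ∈ s, 0 < x) :
    CA (j + 1) (partsB j s) ∧ partsA (j + 1) (partsB j s) = s := by
  unfold CA at hB
  rcases eq_or_ne s 0 with rfl | hne
  · have hbot : ((⊥ : ℕ) : ℤ) = 0 := rfl
    simp only [Multiset.sup_zero, Multiset.card_zero, Nat.cast_zero, zero_add, hbot] at hB
    have hj : j ≤ -1 := by omega
    have hpB : partsB j 0 = Multiset.replicate (-3 * j - 2).toNat 1 := by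
      unfold partsB; rw [if_pos rfl]
    have hm1 : 1 ≤ (-3 * j - 2).toNat := by omega
    have hsup : (Multiset.replicate (-3 * j - 2).toNat 1).sup = 1 := by
      apply le_antisymm
      · apply Multiset.sup_le.2
        intro b hb
        rw [Multiset.eq_of_mem_replicate hb]
      · apply Multiset.le_sup
        rw [Multiset.mem_replicate]
        exact ⟨by omega, rfl⟩
    have hcard : (Multiset.replicate (-3 * j - 2).toNat 1).card = (-3 * j - 2).toNat :=
      Multiset.card_replicate _ _
    rw [hpB]
    constructor
    · unfold CA
      rw [hsup, hcard]
      omega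
    · unfold partsA
      rw [hcard]
      have ha0 : (((-3 * j - 2).toNat : ℤ) + 3 * (j + 1) - 1).toNat = 0 := by omega
      rw [ha0]
      rw [Multiset.filter_cons_of_neg _ (by simp)]
      rw [Multiset.map_replicate, Multiset.filter_eq_nil.2 ?_]
      intro a ha
      rw [Multiset.eq_of_mem_replicate ha]
      simp
  · -- s nonempty
    have hLmem : s.sup ∈ s := Multiset.sup_mem_of_ne_zero hne
    have hL1 : 1 ≤ s.sup := hs _ hLmem
    have ht1 : 1 ≤ s.card := Multiset.card_pos.2 hne
    set e : Multiset ℕ := s.erase s.sup with he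
    have hce : s.sup ::ₘ e = s := Multiset.cons_erase hLmem
    have hcard_e : e.card + 1 = s.card := by
      conv_rhs => rw [← hce]; rw [Multiset.card_cons]
    set m : ℕ := ((s.sup : ℤ) - (s.card : ℤ) - 3 * j - 1).toNat with hm
    have hmcast : (m : ℤ) = (s.sup : ℤ) - (s.card : ℤ) - 3 * j - 1 :=
      Int.toNat_of_nonneg (by omega)
    have hpB : partsB j s = e.map (· + 1) + Multiset.replicate m 1 := by
      unfold partsB; rw [if_neg hne]
    have hcardB : (e.map (· + 1) + Multiset.replicate m 1).card = e.card + m := by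
      rw [Multiset.card_add, Multiset.card_map, Multiset.card_replicate]
    have hsupB : (e.map (· + 1) + Multiset.replicate m 1).sup ≤ s.sup + 1 := by
      apply Multiset.sup_le.2
      intro b hb
      rw [Multiset.mem_add] at hb
      rcases hb with hb | hb
      · rw [Multiset.mem_map] at hb
        obtain ⟨x, hx, rfl⟩ := hb
        have : x ≤ s.sup := Multiset.le_sup (Multiset.mem_of_mem_erase hx)
        omega
      · rw [Multiset.eq_of_mem_replicate hb]; omega
    rw [hpB]
    constructor
    · unfold CA
      rw [hcardB]
      have := hsupB
      omega
    · unfold partsA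
      rw [hcardB]
      have ha : ((((e.card + m : ℕ)) : ℤ) + 3 * (j + 1) - 1).toNat = s.sup := by
        push_cast
        omega
      rw [ha]
      have hmapmap : (e.map (· + 1) + Multiset.replicate m 1).map (· - 1)
          = e + Multiset.replicate m 0 := by
        rw [Multiset.map_add, Multiset.map_map, Multiset.map_replicate]
        congr 1
        · have : ∀ x ∈ e, ((· - 1) ∘ (· + 1)) x = id x := by
            intro x _
            simp only [Function.comp, id]
            omega
          rw [Multiset.map_congr rfl this, Multiset.map_id]
      rw [hmapmap]
      rw [Multiset.filter_cons_of_pos _ (by simp only [ne_eq]; omega)]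
      rw [Multiset.filter_add]
      rw [Multiset.filter_eq_self.2 ?_, Multiset.filter_eq_nil.2 ?_]
      · rw [add_zero]; exact hce
      · intro a ha
        rw [Multiset.eq_of_mem_replicate ha]
        simp
      · intro a ha
        have := hs a (Multiset.mem_of_mem_erase ha)
        simp only [ne_eq]
        omega

lemma phi_invol (j : ℤ) (s : Multiset ℕ) (hs : ∀ x ∈ s, 0 < x) (hj : s = 0 → j ≠ 0) :
    phiParts (phiIdx j s) (phiParts j s) = s ∧ phiIdx (phiIdx j s) (phiParts j s) = j := by
  by_cases h : CA j s
  · have hj1 : s = 0 → 1 ≤ j := by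
      intro h9
      have hne := hj h9
      rw [h9] at h
      unfold CA at h
      have hb : ((⊥ : ℕ) : ℤ) = 0 := rfl
      simp only [Multiset.sup_zero, Multiset.card_zero, Nat.cast_zero, zero_add, hb] at h
      omega
    obtain ⟨hnc, heq⟩ := invAB j s h hs hj1
    rw [show phiIdx j s = j - 1 from if_pos h, show phiParts j s = partsA j s from if_pos h]
    rw [show phiParts (j - 1) (partsA j s) = partsB (j - 1) (partsA j s) from if_neg hnc,
      show phiIdx (j - 1) (partsA j s) = (j - 1) + 1 from if_neg hnc]
    exact ⟨heq, by ring⟩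
  · obtain ⟨hc, heq⟩ := invBA j s h hs
    rw [show phiIdx j s = j + 1 from if_neg h, show phiParts j s = partsB j s from if_neg h]
    rw [show phiParts (j + 1) (partsB j s) = partsA (j + 1) (partsB j s) from if_pos hc,
      show phiIdx (j + 1) (partsB j s) = (j + 1) - 1 from if_pos hc]
    exact ⟨heq, by ring⟩

/-- The sigma type of pairs (index, partition). -/
abbrev PT (n : ℕ) := Σ k : ℤ, Nat.Partition ((n : ℤ) - gZ k).toNat

/-- The finset of valid pairs. -/
noncomputable def Xfin (n : ℕ) : Finset (PT n) :=
  (Finset.Icc (-(n : ℤ)) (n : ℤ)).sigma fun k =>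
    if 0 ≤ (n : ℤ) - gZ k then (Finset.univ : Finset (Nat.Partition ((n : ℤ) - gZ k).toNat))
    else ∅

lemma parts_sum_int (n : ℕ) (j : ℤ) (lam : Nat.Partition ((n : ℤ) - gZ j).toNat)
    (h0 : 0 ≤ (n : ℤ) - gZ j) : ((lam.parts.sum : ℕ) : ℤ) = (n : ℤ) - gZ j := by
  rw [lam.parts_sum]; omega

lemma hj_of (n : ℕ) (hn : 0 < n) (j : ℤ) (lam : Nat.Partition ((n : ℤ) - gZ j).toNat)
    (h0 : 0 ≤ (n : ℤ) - gZ j) : lam.parts = 0 → j ≠ 0 := by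
  intro h9 hj0
  have hsum := parts_sum_int n j lam h0
  rw [h9] at hsum
  rw [hj0] at hsum
  rw [gZ_zero] at hsum
  simp only [Multiset.sum_zero, Nat.cast_zero] at hsum
  omega

lemma phi_sum (n : ℕ) (hn : 0 < n) (j : ℤ) (lam : Nat.Partition ((n : ℤ) - gZ j).toNat)
    (h0 : 0 ≤ (n : ℤ) - gZ j) :
    ((phiParts j lam.parts).sum : ℤ) = (n : ℤ) - gZ (phiIdx j lam.parts) := by
  have hpos : ∀ x ∈ lam.parts, 0 < x := fun x hx => lam.parts_pos hx
  have hsum := parts_sum_int n j lam h0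
  by_cases h : CA j lam.parts
  · have hj1 : lam.parts = 0 → 1 ≤ j := by
      intro h9
      have hne := hj_of n hn j lam h0 h9
      rw [h9] at h
      unfold CA at h
      have hb : ((⊥ : ℕ) : ℤ) = 0 := rfl
      simp only [Multiset.sup_zero, Multiset.card_zero, Nat.cast_zero, zero_add, hb] at h
      omega
    rw [show phiIdx j lam.parts = j - 1 from if_pos h,
      show phiParts j lam.parts = partsA j lam.parts from if_pos h,
      gZ_sub_one, sum_partsA j _ h hpos hj1]
    omega
  · rw [show phiIdx j lam.parts = j + 1 from if_neg h,
      show phiParts j lam.parts = partsB j lam.parts from if_neg h,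
      gZ_add_one, sum_partsB j _ h hpos]
    omega

/-- The involution on pairs. -/
def Phi (n : ℕ) (hn : 0 < n) (x : PT n) (h0 : 0 ≤ (n : ℤ) - gZ x.1) : PT n :=
  ⟨phiIdx x.1 x.2.parts,
   { parts := phiParts x.1 x.2.parts
     parts_pos := fun hi => phiParts_pos _ _ (fun y hy => x.2.parts_pos hy) _ hi
     parts_sum := by
       have := phi_sum n hn x.1 x.2 h0
       omega }⟩

lemma PT_ext {n : ℕ} (x y : PT n) (h1 : x.1 = y.1) (h2 : x.2.parts = y.2.parts) : x = y := by
  rcases x with ⟨a, p⟩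
  rcases y with ⟨b, q⟩
  dsimp at h1
  subst h1
  dsimp at h2
  have : p = q := Nat.Partition.ext h2
  rw [this]

lemma mem_X_cond {n : ℕ} {x : PT n} (hx : x ∈ Xfin n) : 0 ≤ (n : ℤ) - gZ x.1 := by
  rcases x with ⟨j, lam⟩
  rw [Xfin, Finset.mem_sigma] at hx
  by_contra h
  rw [if_neg h] at hx
  exact absurd hx.2 (Finset.notMem_empty _)

lemma Phi_mem {n : ℕ} (hn : 0 < n) (x : PT n) (hx : x ∈ Xfin n) :
    Phi n hn x (mem_X_cond hx) ∈ Xfin n := by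
  have h0 := mem_X_cond hx
  have hsum := phi_sum n hn x.1 x.2 h0
  have h0' : 0 ≤ (n : ℤ) - gZ (phiIdx x.1 x.2.parts) := by
    have hnn : (0 : ℤ) ≤ ((phiParts x.1 x.2.parts).sum : ℤ) := Int.natCast_nonneg _
    omega
  unfold Phi
  rw [Xfin, Finset.mem_sigma]
  dsimp only
  constructor
  · rw [Finset.mem_Icc]
    have habs := abs_le_gZ (phiIdx x.1 x.2.parts)
    rcases abs_cases (phiIdx x.1 x.2.parts) with ⟨hh1, hh2⟩ | ⟨hh1, hh2⟩ <;> omega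
  · rw [if_pos h0']
    exact Finset.mem_univ _

lemma Phi_ne {n : ℕ} (hn : 0 < n) (x : PT n) (hx : x ∈ Xfin n) :
    Phi n hn x (mem_X_cond hx) ≠ x := by
  intro heq
  have h1 := congrArg Sigma.fst heq
  dsimp [Phi] at h1
  unfold phiIdx at h1
  split at h1 <;> omega

lemma Phi_invol {n : ℕ} (hn : 0 < n) (x : PT n) (hx : x ∈ Xfin n)
    (h0' : 0 ≤ (n : ℤ) - gZ (Phi n hn x (mem_X_cond hx)).1) :
    Phi n hn (Phi n hn x (mem_X_cond hx)) h0' = x := by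
  have h0 := mem_X_cond hx
  have hpos : ∀ y ∈ x.2.parts, 0 < y := fun y hy => x.2.parts_pos hy
  have hj0 := hj_of n hn x.1 x.2 h0
  obtain ⟨k1, k2⟩ := phi_invol x.1 x.2.parts hpos hj0
  apply PT_ext
  · exact k2
  · exact k1

theorem stmt6 (n : ℕ) (hn : 0 < n) :
    Even (∑ᶠ k : ℤ, (-1 : ℤ) ^ ((k + 1) / 2).natAbs *
      intExt partitionCount ((n : ℤ) - k * (3 * k + 1) / 2)) := by
  classical
  set F : ℤ → ℤ := fun k => (-1 : ℤ) ^ ((k + 1) / 2).natAbs *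
      intExt partitionCount ((n : ℤ) - k * (3 * k + 1) / 2) with hF
  have hgz : ∀ k : ℤ, (n : ℤ) - k * (3 * k + 1) / 2 = (n : ℤ) - gZ k := fun k => rfl
  have hsupp : Function.support F ⊆ ↑(Finset.Icc (-(n : ℤ)) (n : ℤ)) := by
    intro k hk
    simp only [Function.mem_support, hF] at hk
    have h0 : 0 ≤ (n : ℤ) - gZ k := by
      by_contra h
      apply hk
      rw [hgz k]
      unfold intExt
      rw [if_neg h, mul_zero]
    have habs := abs_le_gZ k
    simp only [Finset.coe_Icc, Set.mem_Icc]
    rcases abs_cases k with ⟨h1, h2⟩ | ⟨h1, h2⟩ <;> omega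
  rw [finsum_eq_sum_of_support_subset F hsupp]
  -- reduce to ZMod 2
  have key : ((∑ k ∈ Finset.Icc (-(n : ℤ)) (n : ℤ), F k : ℤ) : ZMod 2) = 0 → Even (∑ k ∈ Finset.Icc (-(n : ℤ)) (n : ℤ), F k) := by
    intro h
    have h2 := (ZMod.intCast_zmod_eq_zero_iff_dvd _ 2).1 h
    rcases h2 with ⟨c, hc⟩
    exact ⟨c, by omega⟩
  apply key
  rw [Int.cast_sum]
  have hterm : ∀ k ∈ Finset.Icc (-(n : ℤ)) (n : ℤ), ((F k : ℤ) : ZMod 2) =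
      (if 0 ≤ (n : ℤ) - gZ k then
        ((partitionCount ((n : ℤ) - gZ k).toNat : ℕ) : ZMod 2) else 0) := by
    intro k _
    rw [hF]
    simp only
    rw [hgz k]
    rw [Int.cast_mul, Int.cast_pow, Int.cast_neg, Int.cast_one]
    have hneg1 : (-1 : ZMod 2) = 1 := by decide
    rw [hneg1, one_pow, one_mul]
    unfold intExt
    split
    · rw [Int.cast_natCast]
    · rw [Int.cast_zero]
  rw [Finset.sum_congr rfl hterm]
  have hsig : ∑ k ∈ Finset.Icc (-(n : ℤ)) (n : ℤ),
      (if 0 ≤ (n : ℤ) - gZ k then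
        ((partitionCount ((n : ℤ) - gZ k).toNat : ℕ) : ZMod 2) else 0) =
      ∑ x ∈ Xfin n, (1 : ZMod 2) := by
    rw [Xfin, Finset.sum_sigma]
    apply Finset.sum_congr rfl
    intro k _
    split
    · next h =>
      rw [Finset.sum_const]
      rw [Finset.card_univ]
      unfold partitionCount
      rw [Nat.card_eq_fintype_card]
      rw [nsmul_eq_mul, mul_one]
    · simp
  rw [hsig]
  exact Finset.sum_involution
    (fun x hx => Phi n hn x (mem_X_cond hx))
    (fun x hx => by decide)
    (fun x hx _ => Phi_ne hn x hx)
    (fun x hx => Phi_mem hn x hx)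
    (fun x hx => Phi_invol hn x hx _)
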